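/- Let P be a finite graded poset. Then the birational antichain gyration and birational order gyration are intertwined by Θ ∘ Δ⁻¹: namely Θ ∘ Δ⁻¹ ∘ BAG = BOG ∘ Θ ∘ Δ⁻¹ as maps on positive labelings of P. -/

import Mathlib

/-!
Birational (commutative) antichain/order rowmotion on a finite poset `P`, with labels in `ℝ`
and positive labelings, following Joseph–Roby, "Birational and noncommutative lifts of
antichain toggling and rowmotion".
-/

open Finset

attribute [local instance] Classical.propDecidable

variable {P : Type*} [Fintype P] [PartialOrder P]

/-- `c` is a saturated chain in `P`: consecutive entries are covers. -/
def SatChain {P : Type*} [PartialOrder P] {k : ℕ} (c : Fin (k + 1) → P) : Prop :=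
  ∀ i : Fin k, c i.castSucc ⋖ c i.succ

/-- `c` is a maximal chain of `P`: a saturated chain from a minimal element to a maximal
element of `P` (equivalently, the restriction to `P` of a maximal chain
`0̂ ⋖ y₁ ⋖ ⋯ ⋖ y_k ⋖ 1̂` of `P̂`). -/
def MaxChain {P : Type*} [PartialOrder P] {k : ℕ} (c : Fin (k + 1) → P) : Prop :=
  SatChain c ∧ IsMin (c 0) ∧ IsMax (c (Fin.last k))

/-- `Υ_v(g)`: the sum over all maximal chains `(y₁, …, y_k)` of `P` through `v` of the
products `g(y₁)⋯g(y_k)` of the labels along the chain. -/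
noncomputable def Upsilon (g : P → ℝ) (v : P) : ℝ :=
  ∑ k ∈ range (Fintype.card P),
    ∑ c ∈ univ.filter (fun c : Fin (k + 1) → P => MaxChain c ∧ ∃ j, c j = v),
      (List.ofFn (g ∘ c)).prod

/-- The birational antichain toggle `τ_v`: it replaces the label at `v` by `C / Υ_v(g)` and
fixes all other labels. -/
noncomputable def atog (C : ℝ) (v : P) (g : P → ℝ) : P → ℝ :=
  fun x => if x = v then C / Upsilon g v else g x

/-- `∑_{y ∈ P̂, y ⋖ x} f(y)`, with the convention `f(0̂) = 1` (the unique lower cover in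
`P̂` of a minimal element of `P` is `0̂`). -/
noncomputable def lowSum (f : P → ℝ) (x : P) : ℝ :=
  (if IsMin x then 1 else 0) + ∑ y ∈ univ.filter (fun y => y ⋖ x), f y

/-- `∑_{y ∈ P̂, y ⋗ x} 1/f(y)`, with the convention `f(1̂) = C`. -/
noncomputable def upInvSum (C : ℝ) (f : P → ℝ) (x : P) : ℝ :=
  (if IsMax x then 1 / C else 0) + ∑ y ∈ univ.filter (fun y => x ⋖ y), 1 / f y

/-- The birational order toggle `T_v`: it replaces the label at `v` by
`(∑_{y ∈ P̂, y ⋖ v} f(y)) / (f(v) · ∑_{y ∈ P̂, y ⋗ v} 1/f(y))` (with `f(0̂) = 1`,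
`f(1̂) = C`) and fixes all other labels. -/
noncomputable def otog (C : ℝ) (v : P) (f : P → ℝ) : P → ℝ :=
  fun x => if x = v then lowSum f v / (f v * upInvSum C f v) else f x

/-- The birational complement map `Θ`: `(Θf)(x) = C / f(x)`. -/
noncomputable def thetaMap (C : ℝ) (f : P → ℝ) : P → ℝ := fun x => C / f x

/-- The birational down transfer `∇`: `(∇f)(x) = f(x) / ∑_{y ∈ P̂, y ⋖ x} f(y)` with
`f(0̂) = 1`. -/
noncomputable def nablaMap (f : P → ℝ) : P → ℝ := fun x => f x / lowSum f x

/-- The birational inverse up transfer `Δ⁻¹`: `(Δ⁻¹f)(x)` is the sum, over all saturated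
chains `x = y₁ ⋖ y₂ ⋖ ⋯ ⋖ y_k ⋖ 1̂` in `P̂` (i.e. saturated chains of `P` starting at `x`
and ending at a maximal element of `P`), of `f(y₁)f(y₂)⋯f(y_k)`. -/
noncomputable def deltaInvMap (f : P → ℝ) : P → ℝ := fun x =>
  ∑ k ∈ range (Fintype.card P),
    ∑ c ∈ univ.filter (fun c : Fin (k + 1) → P =>
        SatChain c ∧ c 0 = x ∧ IsMax (c (Fin.last k))),
      (List.ofFn (f ∘ c)).prod

/-- `l` is a linear extension of `P`: it lists every element of `P` exactly once, and
`l[i] < l[j]` in `P` implies `i < j`. -/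
def IsLinearExtension {P : Type*} [PartialOrder P] (l : List P) : Prop :=
  l.Nodup ∧ (∀ x : P, x ∈ l) ∧
    ∀ (i j : ℕ) (hi : i < l.length) (hj : j < l.length), l[i]'hi < l[j]'hj → i < j

/-- `l` is a linear extension of the subposet `A` of `P`. -/
def IsLinearExtensionOn {P : Type*} [PartialOrder P] (A : Set P) (l : List P) : Prop :=
  l.Nodup ∧ (∀ x : P, x ∈ l ↔ x ∈ A) ∧
    ∀ (i j : ℕ) (hi : i < l.length) (hj : j < l.length), l[i]'hi < l[j]'hj → i < j

/-- Apply the antichain toggles `τ` along the list `l`, first element of `l` first; for a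
linear extension `l = (x₁,…,xₙ)` this is `τ_{xₙ} ∘ ⋯ ∘ τ_{x₂} ∘ τ_{x₁}`, i.e. birational
antichain rowmotion `BAR`. -/
noncomputable def applyATogs (C : ℝ) (l : List P) (g : P → ℝ) : P → ℝ :=
  l.foldl (fun h v => atog C v h) g

/-- Apply the order toggles `T` along the list `l`, first element of `l` first. -/
noncomputable def applyOTogs (C : ℝ) (l : List P) (f : P → ℝ) : P → ℝ :=
  l.foldl (fun h v => otog C v h) f

/-- `rk` is a rank function exhibiting `P` as a graded poset of rank `r`: minimal elements
have rank `0`, ranks increase by `1` along covers, and maximal elements have rank `r`. -/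
def IsRankFunction {P : Type*} [PartialOrder P] (rk : P → ℕ) (r : ℕ) : Prop :=
  (∀ x : P, IsMin x → rk x = 0) ∧ (∀ x y : P, x ⋖ y → rk y = rk x + 1) ∧
    (∀ x : P, IsMax x → rk x = r)

/-- Birational order gyration `BOG`: apply the order rank toggles `ρT_j` of the even ranks
first, then those of the odd ranks (the order within each parity class is immaterial,
since `ρT_i` and `ρT_j` commute when `|i - j| ≠ 1`).  Here `rl j` lists the rank-`j`
elements of the graded poset `P` of rank `r`. -/
noncomputable def BOGapp (C : ℝ) (rl : ℕ → List P) (r : ℕ) (f : P → ℝ) : P → ℝ :=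
  ((List.range (r + 1)).filter (fun j => Odd j)).foldl (fun h j => applyOTogs C (rl j) h)
    (((List.range (r + 1)).filter (fun j => Even j)).foldl
      (fun h j => applyOTogs C (rl j) h) f)

/-- Birational antichain gyration `BAG`: apply the antichain rank toggles `ρτ_j` of the
odd ranks from the bottom of the poset up, then those of the even ranks from the top
down. -/
noncomputable def BAGapp (C : ℝ) (rl : ℕ → List P) (r : ℕ) (g : P → ℝ) : P → ℝ :=
  (((List.range (r + 1)).filter (fun j => Even j)).reverse).foldl
    (fun h j => applyATogs C (rl j) h)
    (((List.range (r + 1)).filter (fun j => Odd j)).foldl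
      (fun h j => applyATogs C (rl j) h) g)

set_option linter.unusedSectionVars false
set_option maxHeartbeats 1000000

lemma SatChain.strictMono {k : ℕ} {c : Fin (k+1) → P} (h : SatChain c) : StrictMono c :=
  Fin.strictMono_iff_lt_succ.mpr fun i => (h i).lt
lemma SatChain.card_le {k : ℕ} {c : Fin (k+1) → P} (h : SatChain c) : k + 1 ≤ Fintype.card P := by
  simpa using Fintype.card_le_of_injective c h.strictMono.injective
lemma satChain_tail {k : ℕ} {c : Fin (k+2) → P} (hc : SatChain c) :
    SatChain (Fin.tail c) := by
  intro i
  show c i.castSucc.succ ⋖ c i.succ.succ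
  rw [Fin.succ_castSucc]
  exact hc i.succ
lemma satChain_cons {k : ℕ} {x : P} {c : Fin (k+1) → P} (hx : x ⋖ c 0) (hc : SatChain c) :
    SatChain (Fin.cons x c) := by
  intro i
  induction i using Fin.cases with
  | zero => simpa using hx
  | succ j =>
    rw [← Fin.succ_castSucc, Fin.cons_succ, Fin.cons_succ]
    exact hc j

/-- summand family -/
noncomputable def dS (f : P → ℝ) (k : ℕ) (x : P) : ℝ :=
  ∑ c ∈ univ.filter (fun c : Fin (k + 1) → P =>
        SatChain c ∧ c 0 = x ∧ IsMax (c (Fin.last k))),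
      (List.ofFn (f ∘ c)).prod

lemma deltaInvMap_eq_sum_dS (f : P → ℝ) (x : P) :
    deltaInvMap f x = ∑ k ∈ range (Fintype.card P), dS f k x := rfl

lemma dS_zero (f : P → ℝ) (x : P) : dS f 0 x = if IsMax x then f x else 0 := by
  unfold dS
  by_cases hx : IsMax x
  · rw [if_pos hx]
    have hfilt : (univ.filter (fun c : Fin 1 → P =>
        SatChain c ∧ c 0 = x ∧ IsMax (c (Fin.last 0)))) = {fun _ => x} := by
      ext c
      simp only [mem_filter, mem_univ, true_and, mem_singleton]
      constructor
      · rintro ⟨-, h0, -⟩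
        funext i
        rw [Subsingleton.elim i 0, h0]
      · rintro rfl
        exact ⟨fun i => i.elim0, rfl, hx⟩
    rw [hfilt, sum_singleton]
    simp [List.ofFn_succ]
  · rw [if_neg hx]
    apply sum_eq_zero
    intro c hc
    simp only [mem_filter] at hc
    exact absurd (hc.2.2.2) (by rw [show c (Fin.last 0) = x from by rw [← hc.2.2.1]; rfl]; exact hx)

lemma dS_succ (f : P → ℝ) (k : ℕ) (x : P) :
    dS f (k+1) x = f x * ∑ y ∈ univ.filter (fun y => x ⋖ y), dS f k y := by
  rw [mul_sum]
  -- RHS: merge double sum into sum over chains starting at a cover of x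
  have merge : ∑ y ∈ univ.filter (fun y => x ⋖ y), f x * dS f k y
      = ∑ c ∈ univ.filter (fun c : Fin (k + 1) → P =>
          SatChain c ∧ x ⋖ c 0 ∧ IsMax (c (Fin.last k))), f x * (List.ofFn (f ∘ c)).prod := by
    rw [← Finset.sum_fiberwise_of_maps_to (g := fun c : Fin (k+1) → P => c 0)
        (t := univ.filter (fun y => x ⋖ y)) (fun c hc => by
          simp only [mem_filter, mem_univ, true_and] at hc ⊢; exact hc.2.1)]
    apply sum_congr rfl
    intro y hy
    simp only [mem_filter, mem_univ, true_and] at hy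
    unfold dS
    rw [← mul_sum]
    congr 1
    apply sum_congr _ (fun _ _ => rfl)
    ext c
    simp only [mem_filter, mem_univ, true_and]
    constructor
    · rintro ⟨hs, h0, hmax⟩
      exact ⟨⟨hs, h0 ▸ hy, hmax⟩, h0⟩
    · rintro ⟨⟨hs, hcov, hmax⟩, h0⟩
      exact ⟨hs, h0, hmax⟩
  rw [merge]
  unfold dS
  refine Finset.sum_nbij' (i := fun c => Fin.tail c) (j := fun c => Fin.cons x c) ?_ ?_ ?_ ?_ ?_
  · intro c hc
    simp only [mem_filter, mem_univ, true_and] at hc ⊢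
    obtain ⟨hs, h0, hmax⟩ := hc
    refine ⟨satChain_tail hs, ?_, ?_⟩
    · show x ⋖ c (Fin.succ 0)
      have := hs 0
      rwa [show (Fin.castSucc 0 : Fin (k+2)) = 0 from rfl, h0] at this
    · show IsMax (c (Fin.succ (Fin.last k)))
      rwa [Fin.succ_last]
  · intro c hc
    simp only [mem_filter, mem_univ, true_and] at hc ⊢
    obtain ⟨hs, hcov, hmax⟩ := hc
    refine ⟨satChain_cons hcov hs, Fin.cons_zero _ _, ?_⟩
    rw [← Fin.succ_last, Fin.cons_succ]
    exact hmax
  · intro c hc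
    simp only [mem_filter, mem_univ, true_and] at hc
    rw [← hc.2.1]
    exact Fin.cons_self_tail c
  · intro c hc
    funext i
    simp [Fin.tail, Fin.cons_succ]
  · intro c hc
    simp only [mem_filter, mem_univ, true_and] at hc
    rw [List.ofFn_succ]
    simp only [List.prod_cons, Function.comp_apply, hc.2.1]
    rfl

lemma dS_eq_zero_of_big {f : P → ℝ} {k : ℕ} {x : P} (hk : Fintype.card P ≤ k) :
    dS f k x = 0 := by
  unfold dS
  apply sum_eq_zero
  intro c hc
  simp only [mem_filter, mem_univ, true_and] at hc
  exact absurd hc.1.card_le (by omega)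

lemma deltaInvMap_rec (f : P → ℝ) (x : P) :
    deltaInvMap f x = f x * ((if IsMax x then 1 else 0)
      + ∑ y ∈ univ.filter (fun y => x ⋖ y), deltaInvMap f y) := by
  have hcard : 0 < Fintype.card P := Fintype.card_pos_iff.mpr ⟨x⟩
  obtain ⟨m, hm⟩ : ∃ m, Fintype.card P = m + 1 := ⟨_, (Nat.succ_pred_eq_of_pos hcard).symm⟩
  have hDy : ∀ y, deltaInvMap f y = ∑ k ∈ range m, dS f k y + dS f m y := by
    intro y
    rw [deltaInvMap_eq_sum_dS, hm, sum_range_succ]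
  rw [deltaInvMap_eq_sum_dS, hm, Finset.sum_range_succ']
  have h1 : ∑ i ∈ range m, dS f (i + 1) x
      = ∑ i ∈ range m, f x * ∑ y ∈ univ.filter (fun y => x ⋖ y), dS f i y := by
    exact sum_congr rfl fun i _ => dS_succ f i x
  rw [h1, dS_zero]
  have h2 : ∑ y ∈ univ.filter (fun y => x ⋖ y), deltaInvMap f y
      = ∑ y ∈ univ.filter (fun y => x ⋖ y), ∑ k ∈ range m, dS f k y := by
    refine sum_congr rfl fun y hy => ?_
    simp only [mem_filter, mem_univ, true_and] at hy
    rw [hDy y]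
    have : dS f m y = 0 := by
      unfold dS
      apply sum_eq_zero
      intro c hc
      simp only [mem_filter, mem_univ, true_and] at hc
      have := (satChain_cons (by rw [hc.2.1]; exact hy) hc.1).card_le
      omega
    rw [this, add_zero]
  rw [h2, Finset.sum_comm, mul_add, mul_sum]
  rcases Classical.em (IsMax x) with h | h <;> simp [h] <;> ring

lemma deltaInvMap_congr {f f' : P → ℝ} {x : P} (h : ∀ y, x ≤ y → f y = f' y) :
    deltaInvMap f x = deltaInvMap f' x := by
  unfold deltaInvMap
  refine sum_congr rfl fun k _ => sum_congr rfl fun c hc => ?_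
  simp only [mem_filter, mem_univ, true_and] at hc
  have : f ∘ c = f' ∘ c := by
    funext i
    exact h (c i) (by rw [← hc.2.1]; exact hc.1.strictMono.monotone (Fin.zero_le i))
  rw [this]

/-- chains from a minimal element up to `v` (including `v`). -/
noncomputable def Blow (f : P → ℝ) (v : P) : ℝ :=
  ∑ k ∈ range (Fintype.card P),
    ∑ c ∈ univ.filter (fun c : Fin (k + 1) → P =>
        SatChain c ∧ IsMin (c 0) ∧ c (Fin.last k) = v),
      (List.ofFn (f ∘ c)).prod

noncomputable def bS (f : P → ℝ) (k : ℕ) (v : P) : ℝ :=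
  ∑ c ∈ univ.filter (fun c : Fin (k + 1) → P =>
        SatChain c ∧ IsMin (c 0) ∧ c (Fin.last k) = v),
      (List.ofFn (f ∘ c)).prod

lemma Blow_eq_sum_bS (f : P → ℝ) (v : P) :
    Blow f v = ∑ k ∈ range (Fintype.card P), bS f k v := rfl

lemma satChain_init {k : ℕ} {c : Fin (k+2) → P} (hc : SatChain c) :
    SatChain (Fin.init c) := by
  intro i
  show c i.castSucc.castSucc ⋖ c i.succ.castSucc
  rw [← Fin.succ_castSucc]
  exact hc i.castSucc

lemma satChain_snoc {k : ℕ} {x : P} {c : Fin (k+1) → P} (hx : c (Fin.last k) ⋖ x)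
    (hc : SatChain c) : SatChain (Fin.snoc c x) := by
  intro i
  induction i using Fin.lastCases with
  | last =>
    rw [Fin.succ_last]
    simpa [Fin.snoc_castSucc, Fin.snoc_last] using hx
  | cast j =>
    rw [Fin.succ_castSucc]
    rw [Fin.snoc_castSucc, Fin.snoc_castSucc]
    exact hc j

lemma bS_zero (f : P → ℝ) (v : P) : bS f 0 v = if IsMin v then f v else 0 := by
  unfold bS
  by_cases hv : IsMin v
  · rw [if_pos hv]
    have hfilt : (univ.filter (fun c : Fin 1 → P =>
        SatChain c ∧ IsMin (c 0) ∧ c (Fin.last 0) = v)) = {fun _ => v} := by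
      ext c
      simp only [mem_filter, mem_univ, true_and, mem_singleton]
      constructor
      · rintro ⟨-, -, h0⟩
        funext i
        rw [Subsingleton.elim i (Fin.last 0), h0]
      · rintro rfl
        exact ⟨fun i => i.elim0, hv, rfl⟩
    rw [hfilt, sum_singleton]
    simp [List.ofFn_succ]
  · rw [if_neg hv]
    apply sum_eq_zero
    intro c hc
    simp only [mem_filter, mem_univ, true_and] at hc
    refine absurd ?_ hv
    have h0 : c 0 = v := by rw [Subsingleton.elim (0 : Fin 1) (Fin.last 0), hc.2.2]
    exact h0 ▸ hc.2.1

lemma bS_succ (f : P → ℝ) (k : ℕ) (v : P) :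
    bS f (k+1) v = (∑ y ∈ univ.filter (fun y => y ⋖ v), bS f k y) * f v := by
  rw [sum_mul]
  have merge : ∑ y ∈ univ.filter (fun y => y ⋖ v), bS f k y * f v
      = ∑ c ∈ univ.filter (fun c : Fin (k + 1) → P =>
          SatChain c ∧ IsMin (c 0) ∧ c (Fin.last k) ⋖ v), (List.ofFn (f ∘ c)).prod * f v := by
    rw [← Finset.sum_fiberwise_of_maps_to (g := fun c : Fin (k+1) → P => c (Fin.last k))
        (t := univ.filter (fun y => y ⋖ v)) (fun c hc => by
          simp only [mem_filter, mem_univ, true_and] at hc ⊢; exact hc.2.2)]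
    apply sum_congr rfl
    intro y hy
    simp only [mem_filter, mem_univ, true_and] at hy
    unfold bS
    rw [sum_mul]
    apply sum_congr _ (fun _ _ => rfl)
    ext c
    simp only [mem_filter, mem_univ, true_and]
    constructor
    · rintro ⟨hs, h0, hl⟩
      exact ⟨⟨hs, h0, hl ▸ hy⟩, hl⟩
    · rintro ⟨⟨hs, h0, hcov⟩, hl⟩
      exact ⟨hs, h0, hl⟩
  rw [merge]
  unfold bS
  refine Finset.sum_nbij' (i := fun c => Fin.init c) (j := fun c => Fin.snoc c v) ?_ ?_ ?_ ?_ ?_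
  · intro c hc
    simp only [mem_filter, mem_univ, true_and] at hc ⊢
    obtain ⟨hs, h0, hl⟩ := hc
    refine ⟨satChain_init hs, ?_, ?_⟩
    · show IsMin (c (Fin.castSucc 0))
      exact h0
    · show c (Fin.castSucc (Fin.last k)) ⋖ v
      have := hs (Fin.last k)
      rwa [Fin.succ_last, hl] at this
  · intro c hc
    simp only [mem_filter, mem_univ, true_and] at hc ⊢
    obtain ⟨hs, h0, hcov⟩ := hc
    refine ⟨satChain_snoc hcov hs, ?_, ?_⟩
    · have h00 : (0 : Fin (k+2)) = Fin.castSucc 0 := rfl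
      rw [h00, Fin.snoc_castSucc]
      exact h0
    · simp
  · intro c hc
    simp only [mem_filter, mem_univ, true_and] at hc
    rw [← hc.2.2]
    exact Fin.snoc_init_self c
  · intro c hc
    funext i
    simp [Fin.init, Fin.snoc_castSucc]
  · intro c hc
    simp only [mem_filter, mem_univ, true_and] at hc
    rw [List.ofFn_succ']
    simp only [List.concat_eq_append, List.prod_append, List.prod_cons, List.prod_nil,
      Function.comp_apply, hc.2.2, mul_one]
    rfl

lemma bS_eq_zero_of_big {f : P → ℝ} {k : ℕ} {v : P} (hk : Fintype.card P ≤ k) :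
    bS f k v = 0 := by
  unfold bS
  apply sum_eq_zero
  intro c hc
  simp only [mem_filter, mem_univ, true_and] at hc
  have := hc.1.card_le
  omega

lemma Blow_rec (f : P → ℝ) (v : P) :
    Blow f v = ((if IsMin v then 1 else 0)
      + ∑ y ∈ univ.filter (fun y => y ⋖ v), Blow f y) * f v := by
  have hcard : 0 < Fintype.card P := Fintype.card_pos_iff.mpr ⟨v⟩
  obtain ⟨m, hm⟩ : ∃ m, Fintype.card P = m + 1 := ⟨_, (Nat.succ_pred_eq_of_pos hcard).symm⟩
  rw [Blow_eq_sum_bS, hm, Finset.sum_range_succ']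
  have h1 : ∑ i ∈ range m, bS f (i + 1) v
      = ∑ i ∈ range m, (∑ y ∈ univ.filter (fun y => y ⋖ v), bS f i y) * f v :=
    sum_congr rfl fun i _ => bS_succ f i v
  rw [h1, bS_zero]
  have h2 : ∑ y ∈ univ.filter (fun y => y ⋖ v), Blow f y
      = ∑ y ∈ univ.filter (fun y => y ⋖ v), ∑ k ∈ range m, bS f k y := by
    refine sum_congr rfl fun y hy => ?_
    simp only [mem_filter, mem_univ, true_and] at hy
    rw [Blow_eq_sum_bS, hm, sum_range_succ]
    have : bS f m y = 0 := by
      unfold bS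
      apply sum_eq_zero
      intro c hc
      simp only [mem_filter, mem_univ, true_and] at hc
      have := (satChain_snoc (by rw [hc.2.2]; exact hy) hc.1).card_le
      omega
    rw [this, add_zero]
  rw [h2, Finset.sum_comm, add_mul, sum_mul]
  rcases Classical.em (IsMin v) with h | h <;> simp [h] <;> ring

lemma Blow_congr {f f' : P → ℝ} {v : P} (h : ∀ y, y ≤ v → f y = f' y) :
    Blow f v = Blow f' v := by
  unfold Blow
  refine sum_congr rfl fun k _ => sum_congr rfl fun c hc => ?_
  simp only [mem_filter, mem_univ, true_and] at hc
  have : f ∘ c = f' ∘ c := by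
    funext i
    exact h (c i) (by rw [← hc.2.2]; exact hc.1.strictMono.monotone (Fin.le_last i))
  rw [this]

section RankSec
variable {rk : P → ℕ} {r : ℕ} (hrk : IsRankFunction rk r)
include hrk

lemma rk_lt_of_lt {x y : P} (h : x < y) : rk x < rk y := by
  induction y using WellFoundedLT.induction with
  | _ y IH =>
    obtain ⟨z, hz, hzy⟩ := exists_le_covBy_of_lt h
    have hr := hrk.2.1 z y hzy
    rcases eq_or_lt_of_le hz with rfl | hlt
    · omega
    · have := IH z hzy.lt hlt
      omega

lemma rk_le_r (x : P) : rk x ≤ r := by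
  induction x using WellFoundedGT.induction with
  | _ x IH =>
    by_cases hx : IsMax x
    · exact (hrk.2.2 x hx).le
    · obtain ⟨y, hy⟩ := exists_covBy_of_wellFoundedLT hx
      have := IH y hy.lt
      have := hrk.2.1 x y hy
      omega

lemma isMax_of_rk {x : P} (h : rk x = r) : IsMax x := by
  by_contra hx
  obtain ⟨y, hy⟩ := exists_covBy_of_wellFoundedLT hx
  have := hrk.2.1 x y hy
  have := rk_le_r hrk y
  omega

lemma isMin_of_rk {x : P} (h : rk x = 0) : IsMin x := by
  by_contra hx
  obtain ⟨y, hy⟩ := exists_covBy_of_wellFoundedGT hx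
  have := hrk.2.1 y x hy
  omega

lemma satChain_rk {k : ℕ} {c : Fin (k+1) → P} (hc : SatChain c) (i : Fin (k+1)) :
    rk (c i) = rk (c 0) + (i : ℕ) := by
  obtain ⟨n, hn⟩ := i
  induction n with
  | zero => rfl
  | succ j IH =>
    have hj1 : j < k + 1 := by omega
    have hj : j < k := by omega
    have hcov := hc ⟨j, hj⟩
    have e1 : (⟨j, hj⟩ : Fin k).castSucc = ⟨j, hj1⟩ := rfl
    have e2 : (⟨j, hj⟩ : Fin k).succ = ⟨j + 1, hn⟩ := rfl
    rw [e1, e2] at hcov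
    have := hrk.2.1 _ _ hcov
    rw [this, IH hj1]
    show rk (c 0) + j + 1 = rk (c 0) + (j + 1)
    omega

/-- every element is the top of a saturated chain from a minimal element,
of length its rank -/
lemma exists_down_chain (x : P) :
    ∃ c : Fin (rk x + 1) → P, SatChain c ∧ IsMin (c 0) ∧ c (Fin.last (rk x)) = x := by
  induction x using WellFoundedLT.induction with
  | _ x IH =>
    by_cases hx : IsMin x
    · have h0 : rk x = 0 := hrk.1 x hx
      refine ⟨fun _ => x, fun i => absurd i.isLt (by omega), hx, rfl⟩
    · obtain ⟨y, hy⟩ := exists_covBy_of_wellFoundedGT hx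
      obtain ⟨c, hc, hc0, hcl⟩ := IH y hy.lt
      have hr : rk x = rk y + 1 := hrk.2.1 y x hy
      rw [hr]
      refine ⟨Fin.snoc c x, satChain_snoc (by rw [hcl]; exact hy) hc, ?_, by simp⟩
      have h00 : (0 : Fin (rk y + 2)) = Fin.castSucc 0 := rfl
      rw [h00, Fin.snoc_castSucc]
      exact hc0

lemma r_lt_card [Nonempty P] : r < Fintype.card P := by
  obtain ⟨x⟩ := ‹Nonempty P›
  obtain ⟨m, hm, hmax⟩ : ∃ m ∈ (univ : Finset P), ∀ b ∈ (univ : Finset P), ¬ m < b :=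
    let ⟨m, hm⟩ := Finset.exists_maximal (s := univ) ⟨x, mem_univ x⟩
    ⟨m, mem_univ m, fun b _ hb => hb.not_ge (hm.2 (mem_univ b) hb.le)⟩
  have hM : IsMax m := by
    intro b hb
    rcases eq_or_lt_of_le hb with rfl | h
    · exact le_refl _
    · exact absurd h (hmax b (mem_univ b))
  obtain ⟨c, hc, -, -⟩ := exists_down_chain hrk m
  have := hc.card_le
  have := hrk.2.2 m hM
  omega

end RankSec

section RankSec2
variable {rk : P → ℕ} {r : ℕ} (hrk : IsRankFunction rk r)
include hrk

lemma maxChain_len {k : ℕ} {c : Fin (k+1) → P} (hc : MaxChain c) : k = r := by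
  have h0 : rk (c 0) = 0 := hrk.1 _ hc.2.1
  have hl : rk (c (Fin.last k)) = r := hrk.2.2 _ hc.2.2
  have := satChain_rk hrk hc.1 (Fin.last k)
  rw [hl, h0] at this
  simpa using this.symm

lemma maxChain_rk_idx {k : ℕ} {c : Fin (k+1) → P} (hc : MaxChain c) (i : Fin (k+1)) :
    rk (c i) = (i : ℕ) := by
  have h0 : rk (c 0) = 0 := hrk.1 _ hc.2.1
  rw [satChain_rk hrk hc.1 i, h0, zero_add]

lemma maxChain_through {k : ℕ} {c : Fin (k+1) → P} {v : P} (hc : MaxChain c) {j : Fin (k+1)}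
    (hj : c j = v) : (j : ℕ) = rk v := by
  rw [← hj, maxChain_rk_idx hrk hc]

lemma dS_collapse (g : P → ℝ) (v : P) :
    deltaInvMap g v = dS g (r - rk v) v := by
  have : Nonempty P := ⟨v⟩
  rw [deltaInvMap_eq_sum_dS]
  apply Finset.sum_eq_single_of_mem
  · simp only [mem_range]
    have := r_lt_card hrk (P := P)
    omega
  · intro k hk hne
    unfold dS
    apply sum_eq_zero
    intro c hc
    simp only [mem_filter, mem_univ, true_and] at hc
    obtain ⟨hs, h0, hmax⟩ := hc
    have h1 : rk (c (Fin.last k)) = r := hrk.2.2 _ hmax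
    have h2 := satChain_rk hrk hs (Fin.last k)
    rw [h1, h0] at h2
    simp only [Fin.val_last] at h2
    have : rk v ≤ r := rk_le_r hrk v
    omega

lemma bS_collapse (g : P → ℝ) (v : P) :
    Blow g v = bS g (rk v) v := by
  have : Nonempty P := ⟨v⟩
  rw [Blow_eq_sum_bS]
  apply Finset.sum_eq_single_of_mem
  · simp only [mem_range]
    have := r_lt_card hrk (P := P)
    have := rk_le_r hrk v
    omega
  · intro k hk hne
    unfold bS
    apply sum_eq_zero
    intro c hc
    simp only [mem_filter, mem_univ, true_and] at hc
    obtain ⟨hs, h0, hl⟩ := hc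
    have h1 : rk (c 0) = 0 := hrk.1 _ h0
    have h2 := satChain_rk hrk hs (Fin.last k)
    rw [h1, hl] at h2
    simp only [Fin.val_last] at h2
    omega

lemma upsilon_collapse (g : P → ℝ) (v : P) :
    Upsilon g v = ∑ c ∈ univ.filter (fun c : Fin (r + 1) → P => MaxChain c ∧ ∃ j, c j = v),
      (List.ofFn (g ∘ c)).prod := by
  have : Nonempty P := ⟨v⟩
  unfold Upsilon
  apply Finset.sum_eq_single_of_mem
  · simp only [mem_range]
    exact r_lt_card hrk
  · intro k hk hne
    apply sum_eq_zero
    intro c hc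
    simp only [mem_filter, mem_univ, true_and] at hc
    exact absurd (maxChain_len hrk hc.1) hne

lemma upsilon_congr {g g' : P → ℝ} {v : P} (h : ∀ x, rk x ≠ rk v → g x = g' x)
    (hv : g v = g' v) : Upsilon g v = Upsilon g' v := by
  unfold Upsilon
  refine sum_congr rfl fun k _ => sum_congr rfl fun c hc => ?_
  simp only [mem_filter, mem_univ, true_and] at hc
  obtain ⟨hmc, j, hj⟩ := hc
  have hjv : (j : ℕ) = rk v := maxChain_through hrk hmc hj
  have : g ∘ c = g' ∘ c := by
    funext i
    by_cases hi : rk (c i) = rk v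
    · have : (i : ℕ) = rk v := by rw [← maxChain_rk_idx hrk hmc i]; exact hi
      have : i = j := Fin.ext (by omega)
      rw [this]
      simp only [Function.comp_apply, hj, hv]
    · exact h (c i) hi
  rw [this]

lemma upsilon_factor (g : P → ℝ) (v : P) :
    Upsilon g v * g v = Blow g v * deltaInvMap g v := by
  have hvr : rk v ≤ r := rk_le_r hrk v
  rw [upsilon_collapse hrk, bS_collapse hrk, dS_collapse hrk]
  unfold bS dS
  rw [Finset.sum_mul, Finset.sum_mul_sum, ← Finset.sum_product']
  set q := rk v with hq
  refine Finset.sum_nbij'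
    (i := fun c => (fun i : Fin (q+1) => c ⟨(i:ℕ), by omega⟩,
                    fun i : Fin (r-q+1) => c ⟨q + (i:ℕ), by omega⟩))
    (j := fun cc => fun i : Fin (r+1) =>
        if h : (i:ℕ) < q then cc.1 ⟨(i:ℕ), by omega⟩ else cc.2 ⟨(i:ℕ) - q, by omega⟩)
    ?_ ?_ ?_ ?_ ?_
  · -- split maps into product set
    intro c hc
    simp only [mem_filter, mem_univ, true_and, Finset.mem_product] at hc ⊢
    obtain ⟨hmc, j, hj⟩ := hc
    have hjq : (j : ℕ) = q := maxChain_through hrk hmc hj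
    have hcq : c ⟨q, by omega⟩ = v := by
      have : (⟨q, by omega⟩ : Fin (r+1)) = j := Fin.ext (by show q = (j:ℕ); omega)
      rw [this, hj]
    refine ⟨⟨fun i => hmc.1 ⟨(i:ℕ), by omega⟩, hmc.2.1, hcq⟩,
            fun i => ?_, hcq, ?_⟩
    · have h2 : q + ((i : ℕ) + 1) < r + 1 := by omega
      exact hmc.1 ⟨q + (i:ℕ), by omega⟩
    · have : (⟨q + ((Fin.last (r-q) : Fin (r-q+1)) : ℕ), by omega⟩ : Fin (r+1)) = Fin.last r :=
        Fin.ext (by show q + (r - q) = r; omega)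
      rw [this]
      exact hmc.2.2
  · -- glue maps into maxchain set
    intro cc hcc
    simp only [mem_filter, mem_univ, true_and, Finset.mem_product] at hcc ⊢
    obtain ⟨⟨hs1, hm1, hl1⟩, hs2, h02, hM2⟩ := hcc
    constructor
    · refine ⟨fun i => ?_, ?_, ?_⟩
      · -- covers at position i
        by_cases h1 : ((i : ℕ) + 1) < q
        · have h0 : (i : ℕ) < q := by omega
          simp only [Fin.coe_castSucc, Fin.val_succ, dif_pos h1, dif_pos h0]
          exact hs1 ⟨(i:ℕ), by omega⟩
        · by_cases h0 : (i : ℕ) < q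
          · -- seam : i+1 = q
            have hiq : (i : ℕ) + 1 = q := by omega
            simp only [Fin.coe_castSucc, Fin.val_succ, dif_pos h0, dif_neg h1]
            have e1 : (⟨(i:ℕ), by omega⟩ : Fin (q+1)) = (⟨(i:ℕ), by omega⟩ : Fin q).castSucc := rfl
            have hlast : cc.1 ⟨q, by omega⟩ = v := by
              have : (⟨q, by omega⟩ : Fin (q+1)) = Fin.last q := Fin.ext (by simp)
              rw [this]; exact hl1
            have := hs1 ⟨(i:ℕ), by omega⟩
            have e2 : ((⟨(i:ℕ), by omega⟩ : Fin q).succ : Fin (q+1)) = ⟨q, by omega⟩ :=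
              Fin.ext (by simp [hiq])
            rw [e2, hlast] at this
            have e3 : cc.2 ⟨(i:ℕ) + 1 - q, by omega⟩ = v := by
              have : (⟨(i:ℕ) + 1 - q, by omega⟩ : Fin (r-q+1)) = ⟨0, by omega⟩ :=
                Fin.ext (by simp; omega)
              rw [this]
              exact h02
            rw [e3]
            exact this
          · -- both in upper part
            simp only [Fin.coe_castSucc, Fin.val_succ, dif_neg h0, dif_neg h1]
            have := hs2 ⟨(i:ℕ) - q, by omega⟩
            have e1 : ((⟨(i:ℕ) - q, by omega⟩ : Fin (r-q)).castSucc : Fin (r-q+1))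
                = ⟨(i:ℕ) - q, by omega⟩ := rfl
            have e2 : ((⟨(i:ℕ) - q, by omega⟩ : Fin (r-q)).succ : Fin (r-q+1))
                = ⟨(i:ℕ) + 1 - q, by omega⟩ := Fin.ext (by simp; omega)
            rw [e1, e2] at this
            exact this
      · -- IsMin at 0
        by_cases h0 : 0 < q
        · simp only [show ((0 : Fin (r+1)) : ℕ) = 0 from rfl, dif_pos h0]
          exact hm1
        · have hq0 : q = 0 := by omega
          simp only [show ((0 : Fin (r+1)) : ℕ) = 0 from rfl, dif_neg h0]
          have : cc.2 ⟨0 - q, by omega⟩ = v := by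
            have : (⟨0 - q, by omega⟩ : Fin (r-q+1)) = ⟨0, by omega⟩ := Fin.ext (by show 0 - q = 0; omega)
            rw [this]; exact h02
          rw [this]
          exact isMin_of_rk hrk (by omega)
      · -- IsMax at last
        have hnl : ¬ ((Fin.last r : Fin (r+1)) : ℕ) < q := by show ¬ r < q; omega
        simp only [dif_neg hnl]
        have : cc.2 ⟨((Fin.last r : Fin (r+1)) : ℕ) - q, by omega⟩ = cc.2 (Fin.last (r - q)) :=
          congr_arg cc.2 (Fin.ext rfl)
        rw [this]
        exact hM2
    · -- passes through v
      refine ⟨⟨q, by omega⟩, ?_⟩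
      by_cases h0 : q < q
      · omega
      · simp only [dif_neg h0]
        have : (⟨q - q, by omega⟩ : Fin (r-q+1)) = ⟨0, by omega⟩ := Fin.ext (by show q - q = 0; omega)
        rw [this]
        exact h02
  · -- left inverse
    intro c hc
    funext i
    by_cases h : (i : ℕ) < q
    · simp only [dif_pos h]
    · simp only [dif_neg h]
      exact congr_arg c (Fin.ext (by show q + ((i:ℕ) - q) = (i:ℕ); omega))
  · -- right inverse
    intro cc hcc
    simp only [mem_filter, mem_univ, true_and, Finset.mem_product] at hcc
    obtain ⟨⟨hs1, hm1, hl1⟩, hs2, h02, hM2⟩ := hcc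
    have hlast : cc.1 (Fin.last q) = v := hl1
    refine Prod.ext ?_ ?_
    · funext i
      show (if h : (i:ℕ) < q then cc.1 ⟨(i:ℕ), _⟩ else cc.2 ⟨(i:ℕ) - q, _⟩) = cc.1 i
      by_cases h : (i : ℕ) < q
      · simp only [dif_pos h]
      · simp only [dif_neg h]
        have hiq : (i : ℕ) = q := by omega
        have e1 : (⟨(i:ℕ) - q, by omega⟩ : Fin (r-q+1)) = ⟨0, by omega⟩ := Fin.ext (by show (i:ℕ) - q = 0; omega)
        have e2 : i = Fin.last q := Fin.ext (by simp [hiq])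
        rw [e1, e2, hlast]
        exact h02
    · funext i
      show (if h : q + (i:ℕ) < q then cc.1 ⟨q + (i:ℕ), _⟩ else cc.2 ⟨q + (i:ℕ) - q, _⟩) = cc.2 i
      have h : ¬ q + (i:ℕ) < q := by omega
      simp only [dif_neg h]
      exact congr_arg cc.2 (Fin.ext (by simp))
  · -- products
    intro c hc
    simp only [mem_filter, mem_univ, true_and] at hc
    obtain ⟨hmc, j, hj⟩ := hc
    have hjq : (j : ℕ) = q := maxChain_through hrk hmc hj
    have hcq : c ⟨q, by omega⟩ = v := by
      have : (⟨q, by omega⟩ : Fin (r+1)) = j := Fin.ext (by show q = (j:ℕ); omega)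
      rw [this, hj]
    set F : ℕ → ℝ := fun p => if h : p < r + 1 then g (c ⟨p, h⟩) else 1 with hF
    have hFv : ∀ i : Fin (r+1), (g ∘ c) i = F (i : ℕ) := by
      intro i
      simp only [hF, Function.comp_apply, dif_pos i.isLt]
    have e0 : (List.ofFn (g ∘ c)).prod = ∏ p ∈ range (r+1), F p := by
      rw [List.prod_ofFn]
      rw [Finset.prod_congr rfl (fun i _ => hFv i)]
      exact Fin.prod_univ_eq_prod_range F (r+1)
    have e1 : (List.ofFn (g ∘ fun i : Fin (q+1) => c ⟨(i:ℕ), by omega⟩)).prod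
        = (∏ p ∈ range q, F p) * g v := by
      rw [List.prod_ofFn]
      have : ∀ i : Fin (q+1), (g ∘ fun i : Fin (q+1) => c ⟨(i:ℕ), by omega⟩) i = F (i : ℕ) := by
        intro i
        simp only [hF, Function.comp_apply, dif_pos (by omega : (i:ℕ) < r + 1)]
      rw [Finset.prod_congr rfl (fun i _ => this i), Fin.prod_univ_eq_prod_range F (q+1),
        Finset.prod_range_succ]
      congr 1
      simp only [hF, dif_pos (by omega : q < r + 1)]
      rw [hcq]
    have e2 : (List.ofFn (g ∘ fun i : Fin (r-q+1) => c ⟨q + (i:ℕ), by omega⟩)).prod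
        = ∏ p ∈ range (r-q+1), F (q + p) := by
      rw [List.prod_ofFn]
      have : ∀ i : Fin (r-q+1), (g ∘ fun i : Fin (r-q+1) => c ⟨q + (i:ℕ), by omega⟩) i
          = F (q + (i : ℕ)) := by
        intro i
        simp only [hF, Function.comp_apply, dif_pos (by omega : q + (i:ℕ) < r + 1)]
      rw [Finset.prod_congr rfl (fun i _ => this i)]
      exact Fin.prod_univ_eq_prod_range (fun p => F (q + p)) (r-q+1)
    rw [e0, e1, e2]
    have : r + 1 = q + (r - q + 1) := by omega
    rw [this, Finset.prod_range_add]
    ring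

end RankSec2

section RankSec3
variable {rk : P → ℕ} {r : ℕ} (hrk : IsRankFunction rk r)
include hrk

/-- applying all antichain toggles along a list of same-rank elements -/
lemma applyATogs_eq (C : ℝ) (j : ℕ) (l : List P) (hl : ∀ v ∈ l, rk v = j)
    (hnd : l.Nodup) (s : P → ℝ) :
    applyATogs C l s = fun x => if x ∈ l then C / Upsilon s x else s x := by
  induction l generalizing s with
  | nil => simp [applyATogs]
  | cons v t IH =>
    have hv : rk v = j := hl v (List.mem_cons_self)
    have hvt : v ∉ t := (List.nodup_cons.mp hnd).1
    show applyATogs C t (atog C v s) = _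
    rw [IH (fun w hw => hl w (List.mem_cons_of_mem v hw)) (List.nodup_cons.mp hnd).2]
    funext x
    by_cases hx : x ∈ t
    · have hxv : x ≠ v := fun h => hvt (h ▸ hx)
      simp only [hx, if_pos, List.mem_cons, or_true]
      have : Upsilon (atog C v s) x = Upsilon s x := by
        refine upsilon_congr hrk (fun z hz => ?_) ?_
        · unfold atog
          have : z ≠ v := fun h => hz (by rw [h, hv, ← hl x (List.mem_cons_of_mem v hx)])
          simp [this]
        · unfold atog
          simp [hxv]
      rw [this]
    · by_cases hxv : x = v
      · subst hxv
        simp [hx, atog]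
      · simp [hx, hxv, atog]

lemma lowSum_congr_offrank {s s' : P → ℝ} {x : P}
    (h : ∀ z, rk z ≠ rk x → s z = s' z) : lowSum s x = lowSum s' x := by
  unfold lowSum
  congr 1
  refine sum_congr rfl fun y hy => ?_
  simp only [mem_filter, mem_univ, true_and] at hy
  have := hrk.2.1 _ _ hy
  exact h y (by omega)

lemma upInvSum_congr_offrank {C : ℝ} {s s' : P → ℝ} {x : P}
    (h : ∀ z, rk z ≠ rk x → s z = s' z) : upInvSum C s x = upInvSum C s' x := by
  unfold upInvSum
  congr 1
  refine sum_congr rfl fun y hy => ?_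
  simp only [mem_filter, mem_univ, true_and] at hy
  have := hrk.2.1 _ _ hy
  rw [h y (by omega)]

lemma applyOTogs_eq (C : ℝ) (j : ℕ) (l : List P) (hl : ∀ v ∈ l, rk v = j)
    (hnd : l.Nodup) (s : P → ℝ) :
    applyOTogs C l s = fun x => if x ∈ l then lowSum s x / (s x * upInvSum C s x) else s x := by
  induction l generalizing s with
  | nil => simp [applyOTogs]
  | cons v t IH =>
    have hv : rk v = j := hl v (List.mem_cons_self)
    have hvt : v ∉ t := (List.nodup_cons.mp hnd).1
    show applyOTogs C t (otog C v s) = _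
    rw [IH (fun w hw => hl w (List.mem_cons_of_mem v hw)) (List.nodup_cons.mp hnd).2]
    funext x
    by_cases hx : x ∈ t
    · have hxv : x ≠ v := fun h => hvt (h ▸ hx)
      have hrx : rk x = j := hl x (List.mem_cons_of_mem v hx)
      have hcg : ∀ z, rk z ≠ rk x → otog C v s z = s z := by
        intro z hz
        have : z ≠ v := fun h => hz (by rw [h, hv, hrx])
        unfold otog
        simp [this]
      simp only [hx, if_pos, List.mem_cons, or_true]
      rw [lowSum_congr_offrank hrk hcg, upInvSum_congr_offrank hrk hcg]
      have : otog C v s x = s x := by unfold otog; simp [hxv]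
      rw [this]
    · by_cases hxv : x = v
      · subst hxv
        simp [hx, otog]
      · simp [hx, hxv, otog]

end RankSec3

section Main
variable {rk : P → ℕ} {r : ℕ}

/-- `M v = 1_min(v) + ∑_{y⋖v} C / D y` -/
noncomputable def Mq (C : ℝ) (g : P → ℝ) (v : P) : ℝ :=
  (if IsMin v then 1 else 0) + ∑ y ∈ univ.filter (fun y => y ⋖ v), C / deltaInvMap g y
noncomputable def Nq (C : ℝ) (g : P → ℝ) (v : P) : ℝ := g v * Mq C g v
noncomputable def Aq (C : ℝ) (g : P → ℝ) (v : P) : ℝ :=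
  (if IsMin v then 1 else 0) + ∑ y ∈ univ.filter (fun y => y ⋖ v), Nq C g y
noncomputable def Wq (C : ℝ) (g : P → ℝ) (v : P) : ℝ :=
  (if IsMax v then 1 else 0) + ∑ y ∈ univ.filter (fun y => v ⋖ y), C / Nq C g y
noncomputable def oq (C : ℝ) (g : P → ℝ) (v : P) : ℝ := C / (deltaInvMap g v * Aq C g v)
noncomputable def Vq (C : ℝ) (g : P → ℝ) (v : P) : ℝ :=
  (if IsMax v then 1 else 0) + ∑ y ∈ univ.filter (fun y => v ⋖ y), oq C g y * Wq C g y
noncomputable def eq' (C : ℝ) (g : P → ℝ) (v : P) : ℝ := C / (Nq C g v * Vq C g v)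
noncomputable def hq (rk : P → ℕ) (C : ℝ) (g : P → ℝ) : P → ℝ :=
  fun x => if Odd (rk x) then oq C g x else eq' C g x
noncomputable def mq (rk : P → ℕ) (C : ℝ) (g : P → ℝ) : P → ℝ :=
  fun x => if Odd (rk x) then oq C g x else g x
noncomputable def Fq (rk : P → ℕ) (C : ℝ) (g : P → ℝ) : P → ℝ :=
  fun x => if Odd (rk x) then deltaInvMap g x * Aq C g x / Wq C g x else Nq C g x

lemma lowBracket_pos {F : P → ℝ} {x : P} (hF : ∀ y, y ⋖ x → 0 < F y) :
    0 < (if IsMin x then 1 else 0) + ∑ y ∈ univ.filter (fun y => y ⋖ x), F y := by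
  by_cases hx : IsMin x
  · rw [if_pos hx]
    have : ∀ y ∈ univ.filter (fun y => y ⋖ x), 0 ≤ F y := by
      intro y hy
      simp only [mem_filter, mem_univ, true_and] at hy
      exact (hF y hy).le
    have := Finset.sum_nonneg this
    linarith
  · rw [if_neg hx]
    obtain ⟨y, hy⟩ := exists_covBy_of_wellFoundedGT hx
    have hne : (univ.filter (fun y => y ⋖ x)).Nonempty := ⟨y, by simp [hy]⟩
    have : 0 < ∑ y ∈ univ.filter (fun y => y ⋖ x), F y := by
      apply Finset.sum_pos _ hne
      intro z hz
      simp only [mem_filter, mem_univ, true_and] at hz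
      exact hF z hz
    linarith

lemma upBracket_pos {F : P → ℝ} {x : P} (hF : ∀ y, x ⋖ y → 0 < F y) :
    0 < (if IsMax x then 1 else 0) + ∑ y ∈ univ.filter (fun y => x ⋖ y), F y := by
  by_cases hx : IsMax x
  · rw [if_pos hx]
    have : ∀ y ∈ univ.filter (fun y => x ⋖ y), 0 ≤ F y := by
      intro y hy
      simp only [mem_filter, mem_univ, true_and] at hy
      exact (hF y hy).le
    have := Finset.sum_nonneg this
    linarith
  · rw [if_neg hx]
    obtain ⟨y, hy⟩ := exists_covBy_of_wellFoundedLT hx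
    have hne : (univ.filter (fun y => x ⋖ y)).Nonempty := ⟨y, by simp [hy]⟩
    have : 0 < ∑ y ∈ univ.filter (fun y => x ⋖ y), F y := by
      apply Finset.sum_pos _ hne
      intro z hz
      simp only [mem_filter, mem_univ, true_and] at hz
      exact hF z hz
    linarith

variable {C : ℝ} {g : P → ℝ}

lemma deltaInv_pos (hC : 0 < C) (hg : ∀ x, 0 < g x) (v : P) : 0 < deltaInvMap g v := by
  induction v using WellFoundedGT.induction with
  | _ v IH =>
    rw [deltaInvMap_rec]
    refine mul_pos (hg v) (upBracket_pos fun y hy => IH y hy.lt)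

lemma Mq_pos (hC : 0 < C) (hg : ∀ x, 0 < g x) (v : P) : 0 < Mq C g v :=
  lowBracket_pos fun y _ => div_pos hC (deltaInv_pos hC hg y)
lemma Nq_pos (hC : 0 < C) (hg : ∀ x, 0 < g x) (v : P) : 0 < Nq C g v :=
  mul_pos (hg v) (Mq_pos hC hg v)
lemma Aq_pos (hC : 0 < C) (hg : ∀ x, 0 < g x) (v : P) : 0 < Aq C g v :=
  lowBracket_pos fun y _ => Nq_pos hC hg y
lemma Wq_pos (hC : 0 < C) (hg : ∀ x, 0 < g x) (v : P) : 0 < Wq C g v :=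
  upBracket_pos fun y _ => div_pos hC (Nq_pos hC hg y)
lemma oq_pos (hC : 0 < C) (hg : ∀ x, 0 < g x) (v : P) : 0 < oq C g v :=
  div_pos hC (mul_pos (deltaInv_pos hC hg v) (Aq_pos hC hg v))
lemma Vq_pos (hC : 0 < C) (hg : ∀ x, 0 < g x) (v : P) : 0 < Vq C g v :=
  upBracket_pos fun y _ => mul_pos (oq_pos hC hg y) (Wq_pos hC hg y)
lemma eq'_pos (hC : 0 < C) (hg : ∀ x, 0 < g x) (v : P) : 0 < eq' C g v :=
  div_pos hC (mul_pos (Nq_pos hC hg v) (Vq_pos hC hg v))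

variable (hrk : IsRankFunction rk r)
include hrk

lemma parity_covBy {y v : P} (h : y ⋖ v) : (Odd (rk y) ↔ ¬ Odd (rk v)) := by
  have := hrk.2.1 _ _ h
  rw [Nat.odd_iff, Nat.odd_iff]
  omega

lemma not_isMin_of_odd {v : P} (h : Odd (rk v)) : ¬ IsMin v := by
  intro hv
  rw [hrk.1 v hv] at h
  have := Nat.odd_iff.mp h
  omega

lemma blow_m (hC : 0 < C) (hg : ∀ x, 0 < g x) (v : P) :
    Blow (mq rk C g) v = if Odd (rk v) then C / deltaInvMap g v else Nq C g v := by
  induction v using WellFoundedLT.induction with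
  | _ v IH =>
    rw [Blow_rec]
    have hsum : ∀ y ∈ univ.filter (fun y => y ⋖ v), Blow (mq rk C g) y
        = if Odd (rk y) then C / deltaInvMap g y else Nq C g y := by
      intro y hy
      simp only [mem_filter, mem_univ, true_and] at hy
      exact IH y hy.lt
    by_cases hv : Odd (rk v)
    · rw [if_pos hv]
      have hmv : mq rk C g v = oq C g v := by unfold mq; rw [if_pos hv]
      have : ∑ y ∈ univ.filter (fun y => y ⋖ v), Blow (mq rk C g) y
          = ∑ y ∈ univ.filter (fun y => y ⋖ v), Nq C g y := by
        refine sum_congr rfl fun y hy => ?_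
        simp only [mem_filter, mem_univ, true_and] at hy
        rw [hsum y (by simp [hy])]
        rw [if_neg (fun h => ((parity_covBy hrk hy).mp h) hv)]
      rw [this, hmv]
      have hmin : ¬ IsMin v := not_isMin_of_odd hrk hv
      have hA : (if IsMin v then (1:ℝ) else 0) + ∑ y ∈ univ.filter (fun y => y ⋖ v), Nq C g y
          = Aq C g v := rfl
      rw [hA]
      unfold oq
      have h1 : deltaInvMap g v ≠ 0 := (deltaInv_pos hC hg v).ne'
      have h2 : Aq C g v ≠ 0 := (Aq_pos hC hg v).ne'
      field_simp
    · rw [if_neg hv]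
      have hmv : mq rk C g v = g v := by unfold mq; rw [if_neg hv]
      have : ∑ y ∈ univ.filter (fun y => y ⋖ v), Blow (mq rk C g) y
          = ∑ y ∈ univ.filter (fun y => y ⋖ v), C / deltaInvMap g y := by
        refine sum_congr rfl fun y hy => ?_
        simp only [mem_filter, mem_univ, true_and] at hy
        rw [hsum y (by simp [hy])]
        rw [if_pos ((parity_covBy hrk hy).mpr hv)]
      rw [this, hmv]
      have hM : (if IsMin v then (1:ℝ) else 0)
          + ∑ y ∈ univ.filter (fun y => y ⋖ v), C / deltaInvMap g y = Mq C g v := rfl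
      rw [hM]
      unfold Nq
      ring

lemma deltaInv_h (hC : 0 < C) (hg : ∀ x, 0 < g x) (v : P) :
    deltaInvMap (hq rk C g) v
      = if Odd (rk v) then oq C g v * Wq C g v else C / Nq C g v := by
  induction v using WellFoundedGT.induction with
  | _ v IH =>
    rw [deltaInvMap_rec]
    have hsum : ∀ y ∈ univ.filter (fun y => v ⋖ y), deltaInvMap (hq rk C g) y
        = if Odd (rk y) then oq C g y * Wq C g y else C / Nq C g y := by
      intro y hy
      simp only [mem_filter, mem_univ, true_and] at hy
      exact IH y hy.lt
    by_cases hv : Odd (rk v)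
    · rw [if_pos hv]
      have hhv : hq rk C g v = oq C g v := by unfold hq; rw [if_pos hv]
      have : ∑ y ∈ univ.filter (fun y => v ⋖ y), deltaInvMap (hq rk C g) y
          = ∑ y ∈ univ.filter (fun y => v ⋖ y), C / Nq C g y := by
        refine sum_congr rfl fun y hy => ?_
        simp only [mem_filter, mem_univ, true_and] at hy
        rw [hsum y (by simp [hy])]
        rw [if_neg (fun h => ((parity_covBy hrk hy).mp hv) h)]
      rw [this, hhv]
      have hW : (if IsMax v then (1:ℝ) else 0)
          + ∑ y ∈ univ.filter (fun y => v ⋖ y), C / Nq C g y = Wq C g v := rfl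
      rw [hW]
    · rw [if_neg hv]
      have hhv : hq rk C g v = eq' C g v := by unfold hq; rw [if_neg hv]
      have : ∑ y ∈ univ.filter (fun y => v ⋖ y), deltaInvMap (hq rk C g) y
          = ∑ y ∈ univ.filter (fun y => v ⋖ y), oq C g y * Wq C g y := by
        refine sum_congr rfl fun y hy => ?_
        simp only [mem_filter, mem_univ, true_and] at hy
        rw [hsum y (by simp [hy])]
        have hyo : Odd (rk y) := by
          have h2 := hrk.2.1 _ _ hy
          rw [Nat.odd_iff]
          rw [Nat.odd_iff] at hv
          omega
        rw [if_pos hyo]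
      rw [this, hhv]
      have hV : (if IsMax v then (1:ℝ) else 0)
          + ∑ y ∈ univ.filter (fun y => v ⋖ y), oq C g y * Wq C g y = Vq C g v := rfl
      rw [hV]
      unfold eq'
      have h1 : Nq C g v ≠ 0 := (Nq_pos hC hg v).ne'
      have h2 : Vq C g v ≠ 0 := (Vq_pos hC hg v).ne'
      field_simp

end Main

section Phases
variable {rk : P → ℕ} {r : ℕ} {C : ℝ} {g : P → ℝ}

noncomputable def stA (rk : P → ℕ) (C : ℝ) (g : P → ℝ) (t : ℕ) : P → ℝ :=
  fun x => if Odd (rk x) ∧ rk x < t then oq C g x else g x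
noncomputable def stB (rk : P → ℕ) (C : ℝ) (g : P → ℝ) (t : ℕ) : P → ℝ :=
  fun x => if Odd (rk x) then oq C g x else if t ≤ rk x then eq' C g x else g x
noncomputable def stC (rk : P → ℕ) (C : ℝ) (g : P → ℝ) (t : ℕ) : P → ℝ :=
  fun x => if Even (rk x) ∧ rk x < t then Nq C g x else C / deltaInvMap g x
noncomputable def stD (rk : P → ℕ) (C : ℝ) (g : P → ℝ) (t : ℕ) : P → ℝ :=
  fun x => if Even (rk x) then Nq C g x
    else if rk x < t then deltaInvMap g x * Aq C g x / Wq C g x else C / deltaInvMap g x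

variable (hrk : IsRankFunction rk r)
include hrk

lemma rk_mono {z y : P} (h : z ≤ y) : rk z ≤ rk y := by
  rcases eq_or_lt_of_le h with rfl | h
  · exact le_refl _
  · exact (rk_lt_of_lt hrk h).le

lemma stepA_odd (hC : 0 < C) (hg : ∀ x, 0 < g x) (rl : ℕ → List P)
    (hrl : ∀ j, (rl j).Nodup ∧ ∀ x : P, x ∈ rl j ↔ rk x = j) (j : ℕ) (hj : Odd j) :
    applyATogs C (rl j) (stA rk C g j) = stA rk C g (j+1) := by
  rw [applyATogs_eq hrk C j (rl j) (fun v hv => ((hrl j).2 v).mp hv) (hrl j).1]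
  funext x
  by_cases hx : x ∈ rl j
  · have hrx : rk x = j := ((hrl j).2 x).mp hx
    rw [if_pos hx]
    have hsx : stA rk C g j x = g x := by
      unfold stA
      exact if_neg (by omega)
    have hDel : deltaInvMap (stA rk C g j) x = deltaInvMap g x := by
      refine deltaInvMap_congr fun z hz => ?_
      have : ¬ (Odd (rk z) ∧ rk z < j) := by
        rcases eq_or_lt_of_le hz with rfl | h
        · omega
        · have := rk_lt_of_lt hrk h
          omega
      unfold stA
      rw [if_neg this]
    have hBlow : Blow (stA rk C g j) x = Aq C g x * g x := by
      rw [Blow_rec]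
      have hstep : ∀ y ∈ univ.filter (fun y => y ⋖ x), Blow (stA rk C g j) y = Nq C g y := by
        intro y hy
        simp only [mem_filter, mem_univ, true_and] at hy
        have hry : rk y + 1 = j := by rw [← hrx]; exact (hrk.2.1 y x hy).symm
        have h1 : Blow (stA rk C g j) y = Blow (mq rk C g) y := by
          refine Blow_congr fun z hz => ?_
          have hzr : rk z ≤ rk y := rk_mono hrk hz
          unfold stA mq
          by_cases ho : Odd (rk z)
          · rw [if_pos ⟨ho, by omega⟩, if_pos ho]
          · rw [if_neg (by tauto), if_neg ho]
        rw [h1, blow_m hrk hC hg y, if_neg (by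
          rw [Nat.odd_iff] at hj ⊢
          omega)]
      rw [sum_congr rfl hstep, hsx]
      rfl
    have hfac := upsilon_factor hrk (stA rk C g j) x
    rw [hsx, hBlow, hDel] at hfac
    have hUps : Upsilon (stA rk C g j) x = deltaInvMap g x * Aq C g x :=
      mul_right_cancel₀ (hg x).ne' (by rw [hfac]; ring)
    rw [hUps]
    have : stA rk C g (j+1) x = oq C g x := by
      unfold stA
      rw [if_pos ⟨by rw [hrx]; exact hj, by omega⟩]
    rw [this]
    rfl
  · rw [if_neg hx]
    have hrx : rk x ≠ j := fun h => hx (((hrl j).2 x).mpr h)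
    unfold stA
    by_cases ho : Odd (rk x)
    · by_cases hlt : rk x < j
      · rw [if_pos ⟨ho, hlt⟩, if_pos ⟨ho, by omega⟩]
      · rw [if_neg (by tauto), if_neg (by omega)]
    · rw [if_neg (by tauto), if_neg (by tauto)]

lemma stepB_even (hC : 0 < C) (hg : ∀ x, 0 < g x) (rl : ℕ → List P)
    (hrl : ∀ j, (rl j).Nodup ∧ ∀ x : P, x ∈ rl j ↔ rk x = j) (j : ℕ) (hj : ¬ Odd j) :
    applyATogs C (rl j) (stB rk C g (j+1)) = stB rk C g j := by
  rw [applyATogs_eq hrk C j (rl j) (fun v hv => ((hrl j).2 v).mp hv) (hrl j).1]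
  funext x
  by_cases hx : x ∈ rl j
  · have hrx : rk x = j := ((hrl j).2 x).mp hx
    have hox : ¬ Odd (rk x) := by rw [hrx]; exact hj
    rw [if_pos hx]
    have hsx : stB rk C g (j+1) x = g x := by
      unfold stB
      rw [if_neg hox, if_neg (by omega)]
    have hDel : deltaInvMap (stB rk C g (j+1)) x = g x * Vq C g x := by
      rw [deltaInvMap_rec]
      have hstep : ∀ y ∈ univ.filter (fun y => x ⋖ y), deltaInvMap (stB rk C g (j+1)) y
          = oq C g y * Wq C g y := by
        intro y hy
        simp only [mem_filter, mem_univ, true_and] at hy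
        have hry : rk y = j + 1 := by rw [← hrx]; exact hrk.2.1 x y hy
        have h1 : deltaInvMap (stB rk C g (j+1)) y = deltaInvMap (hq rk C g) y := by
          refine deltaInvMap_congr fun z hz => ?_
          have hzr : rk y ≤ rk z := rk_mono hrk hz
          unfold stB hq
          by_cases ho : Odd (rk z)
          · rw [if_pos ho, if_pos ho]
          · rw [if_neg ho, if_neg ho, if_pos (by omega)]
        rw [h1, deltaInv_h hrk hC hg y, if_pos (by
          rw [Nat.odd_iff] at hj ⊢
          omega)]
      rw [sum_congr rfl hstep, hsx]
      rfl
    have hBlow : Blow (stB rk C g (j+1)) x = Nq C g x := by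
      rw [Blow_rec]
      have hstep : ∀ y ∈ univ.filter (fun y => y ⋖ x), Blow (stB rk C g (j+1)) y = C / deltaInvMap g y := by
        intro y hy
        simp only [mem_filter, mem_univ, true_and] at hy
        have hry : rk y + 1 = j := by rw [← hrx]; exact (hrk.2.1 y x hy).symm
        have h1 : Blow (stB rk C g (j+1)) y = Blow (mq rk C g) y := by
          refine Blow_congr fun z hz => ?_
          have hzr : rk z ≤ rk y := rk_mono hrk hz
          unfold stB mq
          by_cases ho : Odd (rk z)
          · rw [if_pos ho, if_pos ho]
          · rw [if_neg ho, if_neg ho, if_neg (by omega)]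
        rw [h1, blow_m hrk hC hg y, if_pos (by
          rw [Nat.odd_iff] at hj ⊢
          omega)]
      rw [sum_congr rfl hstep, hsx]
      unfold Nq
      rw [mul_comm]
      rfl
    have hfac := upsilon_factor hrk (stB rk C g (j+1)) x
    rw [hsx, hBlow, hDel] at hfac
    have hUps : Upsilon (stB rk C g (j+1)) x = Nq C g x * Vq C g x :=
      mul_right_cancel₀ (hg x).ne' (by rw [hfac]; ring)
    rw [hUps]
    have : stB rk C g j x = eq' C g x := by
      unfold stB
      rw [if_neg hox, if_pos (by omega)]
    rw [this]
    rfl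
  · rw [if_neg hx]
    have hrx : rk x ≠ j := fun h => hx (((hrl j).2 x).mpr h)
    unfold stB
    by_cases ho : Odd (rk x)
    · rw [if_pos ho, if_pos ho]
    · rw [if_neg ho, if_neg ho]
      by_cases hlt : j + 1 ≤ rk x
      · rw [if_pos hlt, if_pos (by omega)]
      · rw [if_neg hlt, if_neg (by omega)]


lemma stepC_even (hC : 0 < C) (hg : ∀ x, 0 < g x) (rl : ℕ → List P)
    (hrl : ∀ j, (rl j).Nodup ∧ ∀ x : P, x ∈ rl j ↔ rk x = j) (j : ℕ) (hj : ¬ Odd j) :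
    applyOTogs C (rl j) (stC rk C g j) = stC rk C g (j+1) := by
  rw [applyOTogs_eq hrk C j (rl j) (fun v hv => ((hrl j).2 v).mp hv) (hrl j).1]
  funext x
  by_cases hx : x ∈ rl j
  · have hrx : rk x = j := ((hrl j).2 x).mp hx
    have hex : Even (rk x) := by rw [Nat.even_iff]; rw [Nat.odd_iff] at hj; omega
    rw [if_pos hx]
    have hsx : stC rk C g j x = C / deltaInvMap g x := by
      unfold stC
      exact if_neg (by omega)
    have hlow : lowSum (stC rk C g j) x = Mq C g x := by
      unfold lowSum Mq
      congr 1
      refine sum_congr rfl fun y hy => ?_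
      simp only [mem_filter, mem_univ, true_and] at hy
      have hry : rk y + 1 = j := by rw [← hrx]; exact (hrk.2.1 y x hy).symm
      unfold stC
      rw [if_neg (by
        rw [Nat.even_iff]
        rw [Nat.odd_iff] at hj
        omega)]
    have hup : upInvSum C (stC rk C g j) x = deltaInvMap g x / (C * g x) := by
      unfold upInvSum
      have hstep : ∀ y ∈ univ.filter (fun y => x ⋖ y), 1 / stC rk C g j y
          = deltaInvMap g y / C := by
        intro y hy
        simp only [mem_filter, mem_univ, true_and] at hy
        have hry : rk y = j + 1 := by rw [← hrx]; exact hrk.2.1 x y hy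
        have : stC rk C g j y = C / deltaInvMap g y := by
          unfold stC
          exact if_neg (by
            rw [Nat.even_iff]
            rw [Nat.odd_iff] at hj
            omega)
        rw [this, one_div_div]
      rw [sum_congr rfl hstep]
      have hrec := deltaInvMap_rec g x
      have hgx : g x ≠ 0 := (hg x).ne'
      have hCx : C ≠ 0 := hC.ne'
      rw [← sum_div]
      by_cases hmax : IsMax x
      · rw [if_pos hmax]
        have hsum0 : (univ.filter (fun y => x ⋖ y)) = ∅ := by
          ext y
          simp only [mem_filter, mem_univ, true_and, Finset.notMem_empty, iff_false]
          exact fun hy => hy.lt.not_isMax hmax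
        rw [if_pos hmax] at hrec
        rw [hsum0] at hrec ⊢
        simp only [sum_empty, add_zero, zero_div] at hrec ⊢
        rw [hrec]
        field_simp
      · rw [if_neg hmax]
        rw [if_neg hmax] at hrec
        rw [zero_add] at hrec ⊢
        rw [hrec]
        field_simp
    rw [hsx, hlow, hup]
    have h1 : deltaInvMap g x ≠ 0 := (deltaInv_pos hC hg x).ne'
    have hgx : g x ≠ 0 := (hg x).ne'
    have hCx : C ≠ 0 := hC.ne'
    have : C / deltaInvMap g x * (deltaInvMap g x / (C * g x)) = 1 / g x := by
      field_simp
    rw [this]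
    have : Mq C g x / (1 / g x) = Nq C g x := by
      unfold Nq
      field_simp
    rw [this]
    unfold stC
    rw [if_pos ⟨hex, by omega⟩]
  · rw [if_neg hx]
    have hrx : rk x ≠ j := fun h => hx (((hrl j).2 x).mpr h)
    unfold stC
    by_cases he : Even (rk x)
    · by_cases hlt : rk x < j
      · rw [if_pos ⟨he, hlt⟩, if_pos ⟨he, by omega⟩]
      · rw [if_neg (by tauto), if_neg (by omega)]
    · rw [if_neg (by tauto), if_neg (by tauto)]

lemma stepD_odd (hC : 0 < C) (hg : ∀ x, 0 < g x) (rl : ℕ → List P)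
    (hrl : ∀ j, (rl j).Nodup ∧ ∀ x : P, x ∈ rl j ↔ rk x = j) (j : ℕ) (hj : Odd j) :
    applyOTogs C (rl j) (stD rk C g j) = stD rk C g (j+1) := by
  rw [applyOTogs_eq hrk C j (rl j) (fun v hv => ((hrl j).2 v).mp hv) (hrl j).1]
  funext x
  by_cases hx : x ∈ rl j
  · have hrx : rk x = j := ((hrl j).2 x).mp hx
    have hox : ¬ Even (rk x) := by rw [Nat.even_iff]; rw [Nat.odd_iff] at hj; omega
    rw [if_pos hx]
    have hsx : stD rk C g j x = C / deltaInvMap g x := by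
      unfold stD
      rw [if_neg hox, if_neg (by omega)]
    have hlow : lowSum (stD rk C g j) x = Aq C g x := by
      unfold lowSum Aq
      congr 1
      refine sum_congr rfl fun y hy => ?_
      simp only [mem_filter, mem_univ, true_and] at hy
      have hry : rk y + 1 = j := by rw [← hrx]; exact (hrk.2.1 y x hy).symm
      unfold stD
      rw [if_pos (by
        rw [Nat.even_iff]
        rw [Nat.odd_iff] at hj
        omega)]
    have hup : upInvSum C (stD rk C g j) x = Wq C g x / C := by
      unfold upInvSum Wq
      have hCx : C ≠ 0 := hC.ne'
      rw [add_div, sum_div]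
      congr 1
      · split_ifs <;> simp
      refine sum_congr rfl fun y hy => ?_
      simp only [mem_filter, mem_univ, true_and] at hy
      have hry : rk y = j + 1 := by rw [← hrx]; exact hrk.2.1 x y hy
      have : stD rk C g j y = Nq C g y := by
        unfold stD
        rw [if_pos (by
          rw [Nat.even_iff]
          rw [Nat.odd_iff] at hj
          omega)]
      rw [this]
      have hN : Nq C g y ≠ 0 := (Nq_pos hC hg y).ne'
      field_simp
    rw [hsx, hlow, hup]
    have h1 : deltaInvMap g x ≠ 0 := (deltaInv_pos hC hg x).ne'
    have hW : Wq C g x ≠ 0 := (Wq_pos hC hg x).ne'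
    have hCx : C ≠ 0 := hC.ne'
    have : Aq C g x / (C / deltaInvMap g x * (Wq C g x / C))
        = deltaInvMap g x * Aq C g x / Wq C g x := by
      field_simp
    rw [this]
    unfold stD
    rw [if_neg hox, if_pos (by omega)]
  · rw [if_neg hx]
    have hrx : rk x ≠ j := fun h => hx (((hrl j).2 x).mpr h)
    unfold stD
    by_cases he : Even (rk x)
    · rw [if_pos he, if_pos he]
    · rw [if_neg he, if_neg he]
      by_cases hlt : rk x < j
      · rw [if_pos hlt, if_pos (by omega)]
      · rw [if_neg hlt, if_neg (by omega)]

end Phases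

section Folds

lemma fold_asc (step : ℕ → (P → ℝ) → (P → ℝ)) (st : ℕ → (P → ℝ)) (pr : ℕ → Prop) (r : ℕ)
    (hstep : ∀ j, pr j → j ≤ r → step j (st j) = st (j+1))
    (hconst : ∀ t t', t ≤ t' → (∀ i, t ≤ i → i < t' → i ≤ r → ¬ pr i) → st t = st t') :
    ∀ (L : List ℕ) (t : ℕ), t ≤ r + 1 → L.Pairwise (· < ·) →
      (∀ i, i ∈ L ↔ (pr i ∧ i ≤ r ∧ t ≤ i)) →
      L.foldl (fun h j => step j h) (st t) = st (r+1) := by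
  intro L
  induction L with
  | nil =>
    intro t ht _ hmem
    simp only [List.foldl_nil]
    exact (hconst t (r+1) ht (fun i h1 h2 h3 hpr => by
      have := (hmem i).mpr ⟨hpr, h3, h1⟩
      simp at this)).symm ▸ rfl
  | cons j L' IH =>
    intro t ht hsort hmem
    obtain ⟨hpj, hjr, htj⟩ := (hmem j).mp (List.mem_cons_self)
    have hsc := List.pairwise_cons.mp hsort
    have h0 : st t = st j := by
      refine hconst t j htj fun i h1 h2 h3 hpr => ?_
      have hi := (hmem i).mpr ⟨hpr, h3, h1⟩
      rcases List.mem_cons.mp hi with rfl | hi'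
      · omega
      · exact absurd (hsc.1 i hi') (by omega)
    simp only [List.foldl_cons]
    rw [h0, hstep j hpj hjr]
    refine IH (j+1) (by omega) hsc.2 fun i => ?_
    constructor
    · intro hi
      obtain ⟨h1, h2, -⟩ := (hmem i).mp (List.mem_cons_of_mem j hi)
      exact ⟨h1, h2, hsc.1 i hi⟩
    · rintro ⟨h1, h2, h3⟩
      have hi := (hmem i).mpr ⟨h1, h2, by omega⟩
      rcases List.mem_cons.mp hi with rfl | hi'
      · omega
      · exact hi'

lemma fold_desc (step : ℕ → (P → ℝ) → (P → ℝ)) (st : ℕ → (P → ℝ)) (pr : ℕ → Prop) (r : ℕ)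
    (hstep : ∀ j, pr j → j ≤ r → step j (st (j+1)) = st j)
    (hconst : ∀ t t', t' ≤ t → (∀ i, t' ≤ i → i < t → i ≤ r → ¬ pr i) → st t = st t') :
    ∀ (L : List ℕ) (t : ℕ), t ≤ r + 1 → L.Pairwise (· > ·) →
      (∀ i, i ∈ L ↔ (pr i ∧ i ≤ r ∧ i < t)) →
      L.foldl (fun h j => step j h) (st t) = st 0 := by
  intro L
  induction L with
  | nil =>
    intro t ht _ hmem
    simp only [List.foldl_nil]
    exact hconst t 0 (by omega) (fun i h1 h2 h3 hpr => by
      have := (hmem i).mpr ⟨hpr, h3, h2⟩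
      simp at this)
  | cons j L' IH =>
    intro t ht hsort hmem
    obtain ⟨hpj, hjr, htj⟩ := (hmem j).mp (List.mem_cons_self)
    have hsc := List.pairwise_cons.mp hsort
    have h0 : st t = st (j+1) := by
      refine hconst t (j+1) (by omega) fun i h1 h2 h3 hpr => ?_
      have hi := (hmem i).mpr ⟨hpr, h3, by omega⟩
      rcases List.mem_cons.mp hi with rfl | hi'
      · omega
      · exact absurd (hsc.1 i hi') (by omega)
    simp only [List.foldl_cons]
    rw [h0, hstep j hpj hjr]
    refine IH j (by omega) hsc.2 fun i => ?_
    constructor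
    · intro hi
      obtain ⟨h1, h2, -⟩ := (hmem i).mp (List.mem_cons_of_mem j hi)
      exact ⟨h1, h2, hsc.1 i hi⟩
    · rintro ⟨h1, h2, h3⟩
      have hi := (hmem i).mpr ⟨h1, h2, by omega⟩
      rcases List.mem_cons.mp hi with rfl | hi'
      · omega
      · exact hi'

end Folds

/-- Let `P` be a finite graded poset.  Then birational antichain
gyration and birational order gyration are intertwined by `Θ ∘ Δ⁻¹`:
`Θ ∘ Δ⁻¹ ∘ BAG = BOG ∘ Θ ∘ Δ⁻¹` on positive labelings. -/
theorem theta_deltaInv_BAG_eq_BOG (C : ℝ) (hC : 0 < C)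
    (rk : P → ℕ) (r : ℕ) (hrk : IsRankFunction rk r)
    (rl : ℕ → List P) (hrl : ∀ j, (rl j).Nodup ∧ ∀ x : P, x ∈ rl j ↔ rk x = j)
    (g : P → ℝ) (hg : ∀ x, 0 < g x) :
    thetaMap C (deltaInvMap (BAGapp C rl r g))
      = BOGapp C rl r (thetaMap C (deltaInvMap g)) := by
  have hCx : C ≠ 0 := hC.ne'
  -- list facts
  have hsOdd : ((List.range (r+1)).filter (fun j => Odd j)).Pairwise (· < ·) :=
    List.Pairwise.sublist List.filter_sublist List.pairwise_lt_range
  have hsEven : ((List.range (r+1)).filter (fun j => Even j)).Pairwise (· < ·) :=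
    List.Pairwise.sublist List.filter_sublist List.pairwise_lt_range
  have hsEvenR : (((List.range (r+1)).filter (fun j => Even j)).reverse).Pairwise (· > ·) := by
    rw [List.pairwise_reverse]
    exact hsEven
  have hmOdd : ∀ i, i ∈ (List.range (r+1)).filter (fun j => Odd j)
      ↔ (Odd i ∧ i ≤ r ∧ 0 ≤ i) := by
    intro i
    simp [List.mem_filter, List.mem_range, Nat.lt_succ_iff, decide_eq_true_eq, and_comm]
  have hmEven : ∀ i, i ∈ (List.range (r+1)).filter (fun j => Even j)
      ↔ (¬ Odd i ∧ i ≤ r ∧ 0 ≤ i) := by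
    intro i
    simp [List.mem_filter, List.mem_range, Nat.lt_succ_iff, decide_eq_true_eq, and_comm,
      Nat.not_odd_iff_even]
  have hmEvenR : ∀ i, i ∈ ((List.range (r+1)).filter (fun j => Even j)).reverse
      ↔ (¬ Odd i ∧ i ≤ r ∧ i < r + 1) := by
    intro i
    rw [List.mem_reverse, hmEven i]
    constructor
    · rintro ⟨h1, h2, -⟩; exact ⟨h1, h2, by omega⟩
    · rintro ⟨h1, h2, -⟩; exact ⟨h1, h2, by omega⟩
  -- constancy lemmas for states
  have hconstA : ∀ t t', t ≤ t' → (∀ i, t ≤ i → i < t' → i ≤ r → ¬ Odd i) →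
      stA rk C g t = stA rk C g t' := by
    intro t t' htt hwin
    funext x
    have hxr := rk_le_r hrk x
    unfold stA
    by_cases ho : Odd (rk x)
    · by_cases h1 : rk x < t
      · rw [if_pos ⟨ho, h1⟩, if_pos ⟨ho, by omega⟩]
      · rw [if_neg (by tauto), if_neg (fun hh => hwin (rk x) (by omega) hh.2 hxr ho)]
    · rw [if_neg (by tauto), if_neg (by tauto)]
  have hconstB : ∀ t t', t' ≤ t → (∀ i, t' ≤ i → i < t → i ≤ r → ¬ ¬ Odd i) →
      stB rk C g t = stB rk C g t' := by
    intro t t' htt hwin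
    funext x
    have hxr := rk_le_r hrk x
    unfold stB
    by_cases ho : Odd (rk x)
    · rw [if_pos ho, if_pos ho]
    · rw [if_neg ho, if_neg ho]
      by_cases h1 : t ≤ rk x
      · rw [if_pos h1, if_pos (by omega)]
      · by_cases h2 : t' ≤ rk x
        · exact absurd (by simpa using hwin (rk x) h2 (by omega) hxr : Odd (rk x)) ho
        · rw [if_neg h1, if_neg h2]
  have hconstC : ∀ t t', t ≤ t' → (∀ i, t ≤ i → i < t' → i ≤ r → ¬ ¬ Odd i) →
      stC rk C g t = stC rk C g t' := by
    intro t t' htt hwin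
    funext x
    have hxr := rk_le_r hrk x
    unfold stC
    by_cases ho : Even (rk x)
    · have ho' : ¬ Odd (rk x) := by rw [Nat.even_iff] at ho; rw [Nat.odd_iff]; omega
      by_cases h1 : rk x < t
      · rw [if_pos ⟨ho, h1⟩, if_pos ⟨ho, by omega⟩]
      · rw [if_neg (by tauto), if_neg (fun hh => (hwin (rk x) (by omega) hh.2 hxr) ho')]
    · rw [if_neg (by tauto), if_neg (by tauto)]
  have hconstD : ∀ t t', t ≤ t' → (∀ i, t ≤ i → i < t' → i ≤ r → ¬ Odd i) →
      stD rk C g t = stD rk C g t' := by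
    intro t t' htt hwin
    funext x
    have hxr := rk_le_r hrk x
    unfold stD
    by_cases ho : Even (rk x)
    · rw [if_pos ho, if_pos ho]
    · have ho' : Odd (rk x) := by rw [Nat.even_iff] at ho; rw [Nat.odd_iff]; omega
      rw [if_neg ho, if_neg ho]
      by_cases h1 : rk x < t
      · rw [if_pos h1, if_pos (by omega)]
      · by_cases h2 : rk x < t'
        · exact absurd ho' (hwin (rk x) (by omega) h2 hxr)
        · rw [if_neg h1, if_neg h2]
  -- BAG side
  have eA0 : g = stA rk C g 0 := funext fun x => by
    unfold stA
    rw [if_neg (by omega)]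
  have eA : ((List.range (r+1)).filter (fun j => Odd j)).foldl
      (fun h j => applyATogs C (rl j) h) g = stA rk C g (r+1) := by
    have := fold_asc (fun j h => applyATogs C (rl j) h) (stA rk C g) Odd r
      (fun j hpj _ => stepA_odd hrk hC hg rl hrl j hpj) hconstA _ 0 (by omega) hsOdd hmOdd
    rwa [← eA0] at this
  have eAB : stA rk C g (r+1) = stB rk C g (r+1) := funext fun x => by
    have hxr := rk_le_r hrk x
    unfold stA stB
    by_cases ho : Odd (rk x)
    · rw [if_pos ⟨ho, by omega⟩, if_pos ho]
    · rw [if_neg (by tauto), if_neg ho, if_neg (by omega)]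
  have eB : BAGapp C rl r g = stB rk C g 0 := by
    unfold BAGapp
    rw [eA, eAB]
    exact fold_desc (fun j h => applyATogs C (rl j) h) (stB rk C g) (fun i => ¬ Odd i) r
      (fun j hpj _ => stepB_even hrk hC hg rl hrl j hpj) hconstB _ (r+1) (by omega)
      hsEvenR hmEvenR
  have eBh : stB rk C g 0 = hq rk C g := funext fun x => by
    unfold stB hq
    by_cases ho : Odd (rk x)
    · rw [if_pos ho, if_pos ho]
    · rw [if_neg ho, if_neg ho, if_pos (by omega)]
  -- BOG side
  have eC0 : thetaMap C (deltaInvMap g) = stC rk C g 0 := funext fun x => by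
    unfold thetaMap stC
    rw [if_neg (by omega)]
  have eC : ((List.range (r+1)).filter (fun j => Even j)).foldl
      (fun h j => applyOTogs C (rl j) h) (thetaMap C (deltaInvMap g)) = stC rk C g (r+1) := by
    have := fold_asc (fun j h => applyOTogs C (rl j) h) (stC rk C g) (fun i => ¬ Odd i) r
      (fun j hpj _ => stepC_even hrk hC hg rl hrl j hpj) hconstC _ 0 (by omega) hsEven
      (fun i => by rw [hmEven i])
    rwa [← eC0] at this
  have eCD : stC rk C g (r+1) = stD rk C g 0 := funext fun x => by
    have hxr := rk_le_r hrk x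
    unfold stC stD
    by_cases ho : Even (rk x)
    · rw [if_pos ⟨ho, by omega⟩, if_pos ho]
    · rw [if_neg (by tauto), if_neg ho, if_neg (by omega)]
  have eD : BOGapp C rl r (thetaMap C (deltaInvMap g)) = stD rk C g (r+1) := by
    unfold BOGapp
    rw [eC, eCD]
    exact fold_asc (fun j h => applyOTogs C (rl j) h) (stD rk C g) Odd r
      (fun j hpj _ => stepD_odd hrk hC hg rl hrl j hpj) hconstD _ 0 (by omega) hsOdd hmOdd
  -- conclusion
  rw [eB, eBh, eD]
  funext x
  have hxr := rk_le_r hrk x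
  have hD : deltaInvMap g x ≠ 0 := (deltaInv_pos hC hg x).ne'
  have hA : Aq C g x ≠ 0 := (Aq_pos hC hg x).ne'
  have hW : Wq C g x ≠ 0 := (Wq_pos hC hg x).ne'
  have hN : Nq C g x ≠ 0 := (Nq_pos hC hg x).ne'
  show C / deltaInvMap (hq rk C g) x = _
  rw [deltaInv_h hrk hC hg x]
  unfold stD
  by_cases ho : Odd (rk x)
  · have ho' : ¬ Even (rk x) := by rw [Nat.odd_iff] at ho; rw [Nat.even_iff]; omega
    rw [if_pos ho, if_neg ho', if_pos (by omega)]
    unfold oq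
    rw [div_mul_eq_mul_div, div_div_eq_mul_div]
    rw [div_eq_div_iff (by positivity) hW]
    ring
  · rw [if_neg ho, if_pos (by rw [Nat.odd_iff] at ho; rw [Nat.even_iff]; omega)]
    rw [div_div_eq_mul_div, mul_comm, mul_div_assoc, div_self hCx, mul_one]
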